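/- Let 2 < α < 5 and define v_α(x) = [α/((α−1)4^{α−1})]·(1/x)·[(1+x)^{α−1} − (1−3x)^{α−1}] for x ∈ (0, 1/3]. Then v_α′(x) < 0 on (0, 1/3), i.e., v_α is strictly decreasing. -/

import Mathlib

noncomputable section

/-- The function v_α. -/
def vFun (α : ℝ) (x : ℝ) : ℝ :=
  α / ((α - 1) * (4:ℝ) ^ (α - 1)) * (1/x) * ((1 + x) ^ (α - 1) - (1 - 3*x) ^ (α - 1))

namespace VAux

def fF (α x : ℝ) : ℝ := (1+x)^(α-1) - (1-3*x)^(α-1)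
def fD (α x : ℝ) : ℝ := (α-1)*(1+x)^(α-2) + 3*(α-1)*(1-3*x)^(α-2)
def gG (α x : ℝ) : ℝ := x * fD α x - fF α x
def gD (α x : ℝ) : ℝ := x*(α-1)*(α-2)*((1+x)^(α-3) - 9*(1-3*x)^(α-3))

lemma hasDerivAt_u (x : ℝ) : HasDerivAt (fun y : ℝ => 1 + y) 1 x :=
  (hasDerivAt_id x).const_add 1

lemma hasDerivAt_w (x : ℝ) : HasDerivAt (fun y : ℝ => 1 - 3*y) (-3) x := by
  simpa using ((hasDerivAt_id x).const_mul 3).const_sub 1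

lemma hasDerivAt_fF (α x : ℝ) (hα : 2 < α) : HasDerivAt (fF α) (fD α x) x := by
  have h1 : (1:ℝ) ≤ α - 1 := by linarith
  have hu := (hasDerivAt_u x).rpow_const (p := α-1) (Or.inr h1)
  have hw := (hasDerivAt_w x).rpow_const (p := α-1) (Or.inr h1)
  have := hu.sub hw
  have e : α - 1 - 1 = α - 2 := by ring
  rw [e] at this
  refine this.congr_deriv ?_
  simp [fD]

lemma hasDerivAt_gG (α x : ℝ) (hα : 2 < α)
    (h1 : 1 + x ≠ 0 ∨ 1 ≤ α - 2) (h2 : 1 - 3*x ≠ 0 ∨ 1 ≤ α - 2) :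
    HasDerivAt (gG α) (gD α x) x := by
  have hu := ((hasDerivAt_u x).rpow_const (p := α-2) h1).const_mul (α-1)
  have hw := ((hasDerivAt_w x).rpow_const (p := α-2) h2).const_mul (3*(α-1))
  have hfD : HasDerivAt (fD α) ((α-1)*(α-2)*(1+x)^(α-3) - 9*(α-1)*(α-2)*(1-3*x)^(α-3)) x := by
    have := hu.add hw
    have e : α - 2 - 1 = α - 3 := by ring
    rw [e] at this
    refine this.congr_deriv ?_
    ring
  have := ((hasDerivAt_id x).mul hfD).sub (hasDerivAt_fF α x hα)
  refine this.congr_deriv ?_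
  simp only [gD, fD, id]
  ring

lemma gG_zero (α : ℝ) : gG α 0 = 0 := by simp [gG, fF, fD]

lemma gG_third_neg (α : ℝ) (hα2 : 2 < α) (hα5 : α < 5) : gG α (1/3) < 0 := by
  have h0 : (1:ℝ) - 3*(1/3) = 0 := by norm_num
  have hb : (0:ℝ) < 4/3 := by norm_num
  have e1 : ((4:ℝ)/3) ^ (α-1) = (4/3) ^ (α-2) * (4/3) := by
    rw [show α - 1 = (α-2) + 1 by ring, Real.rpow_add hb, Real.rpow_one]
  have hz1 : ((0:ℝ)) ^ (α-1) = 0 := Real.zero_rpow (by linarith)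
  have hz2 : ((0:ℝ)) ^ (α-2) = 0 := Real.zero_rpow (by linarith)
  have hu : (1:ℝ) + 1/3 = 4/3 := by norm_num
  have hpos : (0:ℝ) < (4/3 : ℝ) ^ (α-2) := Real.rpow_pos_of_pos hb _
  simp only [gG, fF, fD, h0, hu, hz1, hz2, e1]
  nlinarith [hpos]

/-- Core: g is negative on (0, 1/3). -/
lemma gG_neg (α : ℝ) (hα2 : 2 < α) (hα5 : α < 5) {x : ℝ}
    (hx0 : 0 < x) (hx3 : x < 1/3) : gG α x < 0 := by
  -- helper: strict anti on [0, x] when ψ < 0 there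
  have anti_case : (∀ t ∈ Set.Ioo 0 x, (1+t)^(α-3) - 9*(1-3*t)^(α-3) < 0) → gG α x < 0 := by
    intro hψ
    have anti : StrictAntiOn (gG α) (Set.Icc 0 x) := by
      apply strictAntiOn_of_deriv_neg (convex_Icc 0 x)
      · intro t ht
        obtain ⟨ht0, htx⟩ := ht
        exact (hasDerivAt_gG α t hα2 (Or.inl (by linarith))
          (Or.inl (by nlinarith))).continuousAt.continuousWithinAt
      · intro t ht
        rw [interior_Icc] at ht
        obtain ⟨ht0, htx⟩ := ht
        rw [(hasDerivAt_gG α t hα2 (Or.inl (by linarith))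
          (Or.inl (by nlinarith))).deriv]
        have h1 : 0 < t*(α-1)*(α-2) := mul_pos (mul_pos ht0 (by linarith)) (by linarith)
        exact mul_neg_of_pos_of_neg h1 (hψ t ⟨ht0, htx⟩)
    have := anti ⟨le_rfl, hx0.le⟩ ⟨hx0.le, le_rfl⟩ hx0
    rw [gG_zero] at this
    exact this
  rcases le_or_gt α 3 with hA | hB
  · apply anti_case
    intro t ⟨ht0, htx⟩
    have h1 : (1+t)^(α-3) ≤ 1 :=
      Real.rpow_le_one_of_one_le_of_nonpos (by linarith) (by linarith)
    have h2 : (1:ℝ) ≤ (1-3*t)^(α-3) :=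
      Real.one_le_rpow_of_pos_of_le_one_of_nonpos (by nlinarith) (by linarith) (by linarith)
    linarith
  · by_cases hψx : (1+x)^(α-3) - 9*(1-3*x)^(α-3) ≤ 0
    · apply anti_case
      intro t ⟨ht0, htx⟩
      have h1 : (1+t)^(α-3) < (1+x)^(α-3) :=
        Real.rpow_lt_rpow (by linarith) (by linarith) (by linarith)
      have h2 : (1-3*x)^(α-3) < (1-3*t)^(α-3) :=
        Real.rpow_lt_rpow (by linarith) (by linarith) (by linarith)
      linarith
    · push_neg at hψx
      have mono : StrictMonoOn (gG α) (Set.Icc x (1/3)) := by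
        apply strictMonoOn_of_deriv_pos (convex_Icc x (1/3))
        · intro t ht
          exact (hasDerivAt_gG α t hα2 (Or.inr (by linarith))
            (Or.inr (by linarith))).continuousAt.continuousWithinAt
        · intro t ht
          rw [interior_Icc] at ht
          obtain ⟨htx, ht3⟩ := ht
          rw [(hasDerivAt_gG α t hα2 (Or.inr (by linarith))
            (Or.inr (by linarith))).deriv]
          have h1 : (1+x)^(α-3) < (1+t)^(α-3) :=
            Real.rpow_lt_rpow (by linarith) (by linarith) (by linarith)
          have h2 : (1-3*t)^(α-3) < (1-3*x)^(α-3) :=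
            Real.rpow_lt_rpow (by linarith) (by linarith) (by linarith)
          have hp : 0 < t*(α-1)*(α-2) :=
            mul_pos (mul_pos (lt_trans hx0 htx) (by linarith)) (by linarith)
          exact mul_pos hp (by linarith)
      have := mono ⟨le_rfl, hx3.le⟩ ⟨hx3.le, le_rfl⟩ hx3
      exact lt_trans this (gG_third_neg α hα2 hα5)

end VAux

/-- For 2 < α < 5, v_α is strictly decreasing on (0,1/3): its derivative is negative. -/
theorem vFun_deriv_neg (α : ℝ) (hα2 : 2 < α) (hα5 : α < 5) :
    ∀ x ∈ Set.Ioo (0:ℝ) (1/3), deriv (vFun α) x < 0 := by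
  intro x hx
  obtain ⟨hx0, hx3⟩ := hx
  set C : ℝ := α / ((α - 1) * (4:ℝ) ^ (α - 1)) with hC
  have hCpos : 0 < C := by
    apply div_pos (by linarith)
    exact mul_pos (by linarith) (Real.rpow_pos_of_pos (by norm_num) _)
  have hveq : vFun α = fun y => C * y⁻¹ * VAux.fF α y := by
    funext y
    simp only [vFun, VAux.fF, hC, one_div]
  have hinv : HasDerivAt (fun y : ℝ => C * y⁻¹) (C * (-(x^2)⁻¹)) x :=
    (hasDerivAt_inv hx0.ne').const_mul C
  have hder : HasDerivAt (vFun α)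
      (C * (-(x^2)⁻¹) * VAux.fF α x + C * x⁻¹ * VAux.fD α x) x := by
    rw [hveq]
    exact hinv.mul (VAux.hasDerivAt_fF α x hα2)
  rw [hder.deriv]
  have hval : C * (-(x^2)⁻¹) * VAux.fF α x + C * x⁻¹ * VAux.fD α x
      = C / x^2 * VAux.gG α x := by
    simp only [VAux.gG]
    field_simp
    ring
  rw [hval]
  exact mul_neg_of_pos_of_neg (div_pos hCpos (by positivity))
    (VAux.gG_neg α hα2 hα5 hx0 hx3)
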